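/- In the braid group B(Ã_n), let y = σ_j ⋯ σ_2 σ_1 σ_{j+1} ⋯ σ_{n−1} σ_n a_{n+1} with 2 ≤ j ≤ n−1, and set a_n = σ_n a_{n+1} σ_n^{-1}. Then for every r with 0 ≤ r ≤ n−j, one has y^r = (σ_j ⋯ σ_2 σ_1 σ_{j+1} ⋯ σ_{n−1} a_n)^r · σ_n σ_{n−1} ⋯ σ_{n+1−r}. -/

import Mathlib

/-- The defining relators of the affine braid group of type `Ãₙ`: generators indexed by
`Fin (n+1)` arranged in a cycle; cyclically adjacent generators satisfy the braid relation
`xyx = yxy`, all other pairs commute. -/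
def affineBraidRels (n : ℕ) : Set (FreeGroup (Fin (n + 1))) :=
  { r | ∃ i j : Fin (n + 1),
      ((i - j = 1 ∨ j - i = 1) ∧
        r = FreeGroup.of i * FreeGroup.of j * FreeGroup.of i *
          (FreeGroup.of j * FreeGroup.of i * FreeGroup.of j)⁻¹) ∨
      (i ≠ j ∧ ¬(i - j = 1 ∨ j - i = 1) ∧
        r = FreeGroup.of i * FreeGroup.of j * (FreeGroup.of j * FreeGroup.of i)⁻¹) }

/-- The affine braid group `B(Ãₙ)`. -/
def AffineBraidGroup (n : ℕ) : Type := PresentedGroup (affineBraidRels n)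

instance (n : ℕ) : Group (AffineBraidGroup n) := by
  unfold AffineBraidGroup; infer_instance

/-- The generator with 1-based subscript `k`: `σ_k` for `1 ≤ k ≤ n`, and `a_{n+1}` for
`k = n + 1`. -/
def bgen (n : ℕ) (k : ℕ) : AffineBraidGroup n :=
  PresentedGroup.of (Fin.ofNat (n + 1) (k - 1))

/-- The product of the generators with the given (1-based) subscripts. -/
def bword (n : ℕ) (l : List ℕ) : AffineBraidGroup n := (l.map (bgen n)).prod

/-- The decreasing word `[i, i-1, ..., j]` of (1-based) generator subscripts. -/
def decW (i j : ℕ) : List ℕ := (List.range' j (i + 1 - j)).reverse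

/-- The increasing word `[i, i+1, ..., j]` of (1-based) generator subscripts. -/
def incW (i j : ℕ) : List ℕ := List.range' i (j + 1 - i)

namespace Scratch
variable {n : ℕ}

lemma rel_one {r : FreeGroup (Fin (n+1))} (h : r ∈ affineBraidRels n) :
    PresentedGroup.mk (affineBraidRels n) r = 1 :=
  (QuotientGroup.eq_one_iff r).mpr (Subgroup.subset_normalClosure h)

lemma of_eq_of {x y : FreeGroup (Fin (n+1))} (h : x * y⁻¹ ∈ affineBraidRels n) :
    PresentedGroup.mk (affineBraidRels n) x = PresentedGroup.mk (affineBraidRels n) y := by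
  have h1 := rel_one h
  rw [map_mul, map_inv, mul_inv_eq_one] at h1
  exact h1

lemma braid_of (i k : Fin (n+1)) (h : i - k = 1 ∨ k - i = 1) :
    (PresentedGroup.of (rels := affineBraidRels n) i) * PresentedGroup.of k * PresentedGroup.of i
      = PresentedGroup.of k * PresentedGroup.of i * PresentedGroup.of k := by
  have := of_eq_of (n := n) (x := FreeGroup.of i * FreeGroup.of k * FreeGroup.of i)
    (y := FreeGroup.of k * FreeGroup.of i * FreeGroup.of k) ⟨i, k, Or.inl ⟨h, rfl⟩⟩
  simp only [map_mul] at this; exact this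

lemma comm_of (i k : Fin (n+1)) (hne : i ≠ k) (h : ¬(i - k = 1 ∨ k - i = 1)) :
    (PresentedGroup.of (rels := affineBraidRels n) i) * PresentedGroup.of k
      = PresentedGroup.of k * PresentedGroup.of i := by
  have := of_eq_of (n := n) (x := FreeGroup.of i * FreeGroup.of k)
    (y := FreeGroup.of k * FreeGroup.of i) ⟨i, k, Or.inr ⟨hne, h, rfl⟩⟩
  simp only [map_mul] at this; exact this

lemma val_natCast' {a : ℕ} (h : a < n+1) : (Fin.ofNat (n+1) a).val = a := by
  exact Nat.mod_eq_of_lt h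

lemma sub_val (i k : Fin (n+1)) : (i - k).val = (n + 1 - k.val + i.val) % (n+1) := by
  rw [Fin.sub_def]

lemma one_val : (1 : Fin (n+1)).val = 1 % (n+1) := Fin.val_one' _

lemma bgen_comm {k l : ℕ} (hl : 1 ≤ l) (hkl : l + 2 ≤ k) (hk : k ≤ n) :
    bgen n k * bgen n l = bgen n l * bgen n k := by
  have hi : (Fin.ofNat (n+1) (k-1)).val = k - 1 := val_natCast' (by omega)
  have hj : (Fin.ofNat (n+1) (l-1)).val = l - 1 := val_natCast' (by omega)
  apply comm_of
  · intro h; rw [Fin.ext_iff, hi, hj] at h; omega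
  · rintro (h | h) <;> rw [Fin.ext_iff, sub_val, hi, hj, one_val] at h
    · rw [show n + 1 - (l-1) + (k-1) = (k - l) + (n+1) by omega, Nat.add_mod_right,
        Nat.mod_eq_of_lt (by omega), Nat.mod_eq_of_lt (by omega)] at h
      omega
    · rw [show n + 1 - (k-1) + (l-1) = n + 1 - (k - l) by omega,
        Nat.mod_eq_of_lt (by omega), Nat.mod_eq_of_lt (by omega)] at h
      omega

lemma bgen_comm_a {l : ℕ} (hl2 : 2 ≤ l) (hl : l + 1 ≤ n) :
    bgen n l * bgen n (n+1) = bgen n (n+1) * bgen n l := by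
  have hi : (Fin.ofNat (n+1) (l-1)).val = l - 1 := val_natCast' (by omega)
  have hj : (Fin.ofNat (n+1) (n+1-1)).val = n := by
    rw [show n+1-1 = n from rfl]; exact val_natCast' (by omega)
  apply comm_of
  · intro h; rw [Fin.ext_iff, hi, hj] at h; omega
  · rintro (h | h) <;> rw [Fin.ext_iff, sub_val, one_val] at h <;> rw [hi, hj] at h
    · rw [show n + 1 - n + (l-1) = l by omega,
        Nat.mod_eq_of_lt (by omega), Nat.mod_eq_of_lt (by omega)] at h
      omega
    · rw [show n + 1 - (l-1) + n = (n + 1 - l) + (n+1) by omega, Nat.add_mod_right,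
        Nat.mod_eq_of_lt (by omega), Nat.mod_eq_of_lt (by omega)] at h
      omega

lemma bgen_braid {k : ℕ} (h1 : 1 ≤ k) (hk : k + 1 ≤ n) :
    bgen n (k+1) * bgen n k * bgen n (k+1) = bgen n k * bgen n (k+1) * bgen n k := by
  have hi : (Fin.ofNat (n+1) (k+1-1)).val = k := by
    rw [show k+1-1 = k by omega]; exact val_natCast' (by omega)
  have hj : (Fin.ofNat (n+1) (k-1)).val = k - 1 := val_natCast' (by omega)
  apply braid_of
  left
  rw [Fin.ext_iff, sub_val, one_val, hi, hj,
    show n + 1 - (k-1) + k = 1 + (n+1) by omega, Nat.add_mod_right,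
    Nat.mod_eq_of_lt (by omega)]

/-! ### word machinery -/

lemma bword_nil : bword n [] = 1 := rfl

lemma bword_cons (k : ℕ) (l : List ℕ) : bword n (k :: l) = bgen n k * bword n l := by
  simp [bword]

lemma bword_append (l₁ l₂ : List ℕ) : bword n (l₁ ++ l₂) = bword n l₁ * bword n l₂ := by
  simp [bword]

lemma bword_singleton (k : ℕ) : bword n [k] = bgen n k := by
  simp [bword]

lemma bgen_comm_word {k : ℕ} {l : List ℕ}
    (h : ∀ m ∈ l, bgen n k * bgen n m = bgen n m * bgen n k) :
    bgen n k * bword n l = bword n l * bgen n k := by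
  induction l with
  | nil => rw [bword_nil, one_mul, mul_one]
  | cons a t ih =>
      rw [bword_cons, ← mul_assoc, h a List.mem_cons_self, mul_assoc,
        ih (fun m hm => h m (List.mem_cons_of_mem a hm)), ← mul_assoc]

lemma push3 {G : Type*} [Group G] {x p a b c : G} (h1 : x*a = a*x) (h2 : x*b = b*p)
    (h3 : p*c = c*p) : x*(a*b*c) = a*b*c*p := by
  calc x*(a*b*c) = (x*a)*b*c := by simp [mul_assoc]
  _ = a*(x*b)*c := by rw [h1]; simp [mul_assoc]
  _ = a*(b*p)*c := by rw [h2]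
  _ = a*b*(p*c) := by simp [mul_assoc]
  _ = a*b*(c*p) := by rw [h3]
  _ = a*b*c*p := by simp [mul_assoc]

/-- push `σ_k` through the increasing word `σ_a ⋯ σ_b`. -/
lemma push_inc {a b k : ℕ} (ha : 1 ≤ a) (hak : a + 1 ≤ k) (hkb : k ≤ b) (hb : b ≤ n) :
    bgen n k * bword n (incW a b) = bword n (incW a b) * bgen n (k-1) := by
  have e2 : List.range' (k-1) 2 ++ List.range' (k+1) (b-k) = List.range' (k-1) (b - k + 2) := by
    have h := List.range'_append_1 (s := k-1) (m := 2) (n := b-k)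
    rw [show k-1+2 = k+1 by omega] at h
    rw [h, Nat.add_comm]
  have e3 : List.range' a (k-1-a) ++ List.range' (k-1) (b-k+2) = List.range' a (b+1-a) := by
    have h := List.range'_append_1 (s := a) (m := k-1-a) (n := b-k+2)
    rw [show a + (k-1-a) = k-1 by omega] at h
    rw [h]; congr 1; omega
  have hsplit : incW a b
      = List.range' a (k-1-a) ++ List.range' (k-1) 2 ++ List.range' (k+1) (b-k) := by
    unfold incW
    rw [List.append_assoc, e2, e3]
  rw [hsplit, bword_append, bword_append]
  apply push3
  · apply bgen_comm_word
    intro m hm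
    rw [List.mem_range'_1] at hm
    exact bgen_comm (by omega) (by omega) (by omega)
  · -- braid part: bword [k-1, k]
    obtain ⟨m, rfl⟩ : ∃ m, k = m + 1 := ⟨k-1, by omega⟩
    have : List.range' (m+1-1) 2 = [m, m+1] := by
      rw [show m+1-1 = m from rfl]; rfl
    rw [this, show m+1-1 = m from rfl, bword_cons, bword_singleton]
    have hb := bgen_braid (n := n) (k := m) (by omega) (by omega)
    calc bgen n (m+1) * (bgen n m * bgen n (m+1))
        = bgen n (m+1) * bgen n m * bgen n (m+1) := by rw [mul_assoc]
      _ = bgen n m * bgen n (m+1) * bgen n m := hb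
      _ = bgen n m * bgen n (m+1) * bgen n m := rfl
  · apply bgen_comm_word
    intro m hm
    rw [List.mem_range'_1] at hm
    exact (bgen_comm (k := m) (l := k-1) (by omega) (by omega) (by omega)).symm


/-- push `σ_k` through `y` for `j + 2 ≤ k ≤ n`. -/
lemma push_y {j k : ℕ} (hj : 2 ≤ j) (hjn : j + 1 ≤ n) (hk1 : j + 2 ≤ k) (hk2 : k ≤ n) :
    bgen n k * bword n (decW j 1 ++ incW (j+1) n ++ [n+1])
      = bword n (decW j 1 ++ incW (j+1) n ++ [n+1]) * bgen n (k-1) := by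
  rw [bword_append, bword_append]
  apply push3
  · apply bgen_comm_word
    intro m hm
    unfold decW at hm
    rw [List.mem_reverse, show j+1-1 = j from rfl, List.mem_range'_1] at hm
    exact bgen_comm (by omega) (by omega) (by omega)
  · exact push_inc (by omega) (by omega) (by omega) le_rfl
  · rw [bword_singleton]
    exact bgen_comm_a (by omega) (by omega)

lemma decW_split_low {i m : ℕ} (h : m ≤ i) : decW i m = decW i (m+1) ++ [m] := by
  unfold decW
  rw [show i+1-m = (i-m)+1 by omega, List.range'_succ,
    show i+1-(m+1) = i-m by omega, List.reverse_cons]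

lemma decW_cons_high {i m : ℕ} (h1 : 1 ≤ m) (h : m ≤ i) : decW i m = i :: decW (i-1) m := by
  unfold decW
  rw [show i+1-m = (i-m)+1 by omega, List.range'_1_concat, List.reverse_append,
    show m + (i-m) = i by omega, show (i-1)+1-m = i-m by omega]
  rfl

lemma push_D (n j : ℕ) (hj : 2 ≤ j) (hjn : j + 1 ≤ n) :
    ∀ r, r + j + 1 ≤ n →
      bword n (decW n (n+1-r)) * bword n (decW j 1 ++ incW (j+1) n ++ [n+1])
        = bword n (decW j 1 ++ incW (j+1) n ++ [n+1]) * bword n (decW (n-1) (n-r)) := by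
  intro r
  induction r with
  | zero =>
      intro _
      rw [show decW n (n+1-0) = [] by simp [decW],
        show decW (n-1) (n-0) = [] by simp [decW]; omega,
        bword_nil, one_mul, mul_one]
  | succ r ih =>
      intro h
      have hd1 : decW n (n+1-(r+1)) = decW n (n+1-r) ++ [n-r] := by
        rw [show n+1-(r+1) = n - r by omega, decW_split_low (by omega : n - r ≤ n),
          show n-r+1 = n+1-r by omega]
      have hd2 : decW (n-1) (n-(r+1)) = decW (n-1) (n-r) ++ [n-r-1] := by
        rw [show n-(r+1) = n-r-1 by omega, decW_split_low (by omega : n-r-1 ≤ n-1),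
          show n-r-1+1 = n-r by omega]
      have hpy := push_y (n := n) (j := j) (k := n - r) hj hjn (by omega) (by omega)
      rw [hd1, hd2, bword_append (decW n (n+1-r)) [n-r],
        bword_append (decW (n-1) (n-r)) [n-r-1], bword_singleton]
      calc bword n (decW n (n+1-r)) * bgen n (n-r) *
            bword n (decW j 1 ++ incW (j+1) n ++ [n+1])
          = bword n (decW n (n+1-r)) * (bgen n (n-r) *
            bword n (decW j 1 ++ incW (j+1) n ++ [n+1])) := by rw [mul_assoc]
        _ = bword n (decW n (n+1-r)) *
            (bword n (decW j 1 ++ incW (j+1) n ++ [n+1]) * bgen n (n-r-1)) := by rw [hpy]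
        _ = bword n (decW n (n+1-r)) * bword n (decW j 1 ++ incW (j+1) n ++ [n+1]) *
            bgen n (n-r-1) := by rw [mul_assoc]
        _ = bword n (decW j 1 ++ incW (j+1) n ++ [n+1]) * bword n (decW (n-1) (n-r)) *
            bgen n (n-r-1) := by rw [ih (by omega)]
        _ = bword n (decW j 1 ++ incW (j+1) n ++ [n+1]) *
            (bword n (decW (n-1) (n-r)) * bgen n (n-r-1)) := by rw [mul_assoc]

end Scratch

open Scratch

/-- Lemma (case 1): in `B(Ãₙ)`, let `y = σⱼ ⋯ σ₂σ₁ σ_{j+1} ⋯ σₙ₋₁σₙ a_{n+1}` with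
`2 ≤ j ≤ n - 1`, and `aₙ = σₙ a_{n+1} σₙ⁻¹`.  For every `0 ≤ r ≤ n - j`,
`y^r = (σⱼ ⋯ σ₂σ₁ σ_{j+1} ⋯ σₙ₋₁ aₙ)^r · σₙ σₙ₋₁ ⋯ σ_{n+1-r}`. -/
theorem braid_power_formula (n j : ℕ) (hj : 2 ≤ j) (hjn : j ≤ n - 1) (hn : 2 ≤ n)
    (r : ℕ) (hr : r ≤ n - j) :
    (bword n (decW j 1 ++ incW (j + 1) n ++ [n + 1])) ^ r =
      (bword n (decW j 1 ++ incW (j + 1) (n - 1)) *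
        (bgen n n * bgen n (n + 1) * (bgen n n)⁻¹)) ^ r *
      bword n (decW n (n + 1 - r)) := by
  have hjn' : j + 1 ≤ n := by omega
  have hYZ : bword n (decW j 1 ++ incW (j + 1) n ++ [n + 1])
      = (bword n (decW j 1 ++ incW (j + 1) (n - 1)) *
        (bgen n n * bgen n (n + 1) * (bgen n n)⁻¹)) * bgen n n := by
    have hinc : incW (j+1) n = incW (j+1) (n-1) ++ [n] := by
      unfold incW
      rw [show n+1-(j+1) = (n-1+1-(j+1)) + 1 by omega, List.range'_1_concat,
        show j+1 + (n-1+1-(j+1)) = n by omega]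
    rw [hinc, ← List.append_assoc, bword_append, bword_append, bword_append,
      bword_singleton, bword_singleton]
    group
  revert hr
  induction r with
  | zero =>
      intro _
      rw [pow_zero, pow_zero, show decW n (n+1-0) = [] by simp [decW], bword_nil, one_mul]
  | succ r ih =>
      intro h
      have hd : bword n (decW n (n+1-(r+1))) = bgen n n * bword n (decW (n-1) (n-r)) := by
        rw [show n+1-(r+1) = n - r by omega, decW_cons_high (by omega : 1 ≤ n - r) (by omega : n - r ≤ n),
          bword_cons]
      calc (bword n (decW j 1 ++ incW (j + 1) n ++ [n + 1])) ^ (r+1)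
          = (bword n (decW j 1 ++ incW (j + 1) n ++ [n + 1])) ^ r *
            bword n (decW j 1 ++ incW (j + 1) n ++ [n + 1]) := pow_succ _ _
        _ = (bword n (decW j 1 ++ incW (j + 1) (n - 1)) *
              (bgen n n * bgen n (n + 1) * (bgen n n)⁻¹)) ^ r *
            bword n (decW n (n + 1 - r)) *
            bword n (decW j 1 ++ incW (j + 1) n ++ [n + 1]) := by rw [ih (by omega)]
        _ = (bword n (decW j 1 ++ incW (j + 1) (n - 1)) *
              (bgen n n * bgen n (n + 1) * (bgen n n)⁻¹)) ^ r *
            (bword n (decW n (n + 1 - r)) *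
              bword n (decW j 1 ++ incW (j + 1) n ++ [n + 1])) := by rw [mul_assoc]
        _ = (bword n (decW j 1 ++ incW (j + 1) (n - 1)) *
              (bgen n n * bgen n (n + 1) * (bgen n n)⁻¹)) ^ r *
            (bword n (decW j 1 ++ incW (j + 1) n ++ [n + 1]) *
              bword n (decW (n-1) (n-r))) := by
              rw [push_D n j hj hjn' r (by omega)]
        _ = (bword n (decW j 1 ++ incW (j + 1) (n - 1)) *
              (bgen n n * bgen n (n + 1) * (bgen n n)⁻¹)) ^ r *
            (((bword n (decW j 1 ++ incW (j + 1) (n - 1)) *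
              (bgen n n * bgen n (n + 1) * (bgen n n)⁻¹)) * bgen n n) *
              bword n (decW (n-1) (n-r))) := by rw [← hYZ]
        _ = (bword n (decW j 1 ++ incW (j + 1) (n - 1)) *
              (bgen n n * bgen n (n + 1) * (bgen n n)⁻¹)) ^ (r+1) *
            (bgen n n * bword n (decW (n-1) (n-r))) := by
              rw [pow_succ]
              simp only [mul_assoc]
        _ = (bword n (decW j 1 ++ incW (j + 1) (n - 1)) *
              (bgen n n * bgen n (n + 1) * (bgen n n)⁻¹)) ^ (r+1) *
            bword n (decW n (n + 1 - (r+1))) := by rw [hd]
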